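/- Let K be a field and A any subring of K. Then Kr(K|A) := ⋂{ V(T) | V ∈ Zar(K|A) } is a K-function ring, and moreover Kr(K|A) ∩ K equals the integral closure of A in K. -/
import Mathlib


open scoped Polynomial

/-- The Zariski topology on the space of valuation subrings of a field `K`: it is generated
by the basic open sets `B_F = {V | F ⊆ V}`, for `F` a finite subset of `K`. -/
def zarTop (K : Type*) [Field K] : TopologicalSpace (ValuationSubring K) :=
  TopologicalSpace.generateFrom
    {S : Set (ValuationSubring K) |
      ∃ F : Finset K, S = {V : ValuationSubring K | ∀ x ∈ F, x ∈ V}}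

/-- The trivial (Gauss) extension `V(T) = V[T]_{M[T]}` of a valuation domain `V` of `K`
to the rational function field `K(T)`, described as a subset of `RatFunc K`: the
fractions `f/g` with `f, g ∈ V[T]` and `g ∉ M[T]` (i.e. some coefficient of `g`
is a unit of `V`). -/
noncomputable def trivialExtSet {K : Type*} [Field K] (V : ValuationSubring K) :
    Set (RatFunc K) :=
  {h | ∃ f g : K[X], (∀ i, f.coeff i ∈ V) ∧ (∀ i, g.coeff i ∈ V) ∧
    (∃ i, g.coeff i ≠ 0 ∧ (g.coeff i)⁻¹ ∈ V) ∧
    h = algebraMap K[X] (RatFunc K) f / algebraMap K[X] (RatFunc K) g}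

/-- A subring `R` of `K(T)` is a `K`-function ring (in the sense of Halter-Koch) if
`T, T⁻¹ ∈ R` and `f(0) ∈ f·R` for every nonzero polynomial `f ∈ K[T]`. -/
def IsKFunctionRing {K : Type*} [Field K] (R : Subring (RatFunc K)) : Prop :=
  RatFunc.X ∈ R ∧ (RatFunc.X : RatFunc K)⁻¹ ∈ R ∧
    ∀ f : K[X], f ≠ 0 → ∃ r ∈ R,
      algebraMap K (RatFunc K) (f.coeff 0) = algebraMap K[X] (RatFunc K) f * r

/-- The Kronecker function ring `Kr(K|A) = ⋂ {V(T) | V ∈ Zar(K|A)}` as a subset of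
`K(T)`, for `A` a subring of the field `K`. -/
noncomputable def krSet {K : Type*} [Field K] (A : Subring K) : Set (RatFunc K) :=
  ⋂ V ∈ {V : ValuationSubring K | (A : Set K) ⊆ ↑V}, trivialExtSet V


section Aux
open Polynomial

section TE
variable {K : Type*} [Field K] (V : ValuationSubring K)

lemma coeffs_subset {f : K[X]} (hf : ∀ i, f.coeff i ∈ V) :
    (↑f.coeffs : Set K) ⊆ V.toSubring := by
  intro x hx
  simp only [Finset.coe_sort_coe, coeffs, Finset.coe_image, Set.mem_image] at hx
  obtain ⟨i, -, rfl⟩ := hx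
  exact hf i

instance : IsLocalRing V.toSubring := V.isLocalRing

lemma map_residue_ne_zero {g : K[X]} (hg : (↑g.coeffs : Set K) ⊆ V.toSubring)
    (hu : ∃ i, g.coeff i ≠ 0 ∧ (g.coeff i)⁻¹ ∈ V) :
    (g.toSubring V.toSubring hg).map (IsLocalRing.residue V.toSubring) ≠ 0 := by
  obtain ⟨i, hi0, hiinv⟩ := hu
  intro h0
  have hc : ((g.toSubring V.toSubring hg).coeff i : K) = g.coeff i :=
    coeff_toSubring _ _ hg
  have h1 : ((g.toSubring V.toSubring hg).map (IsLocalRing.residue V.toSubring)).coeff i = 0 := by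
    rw [h0]; simp
  rw [coeff_map] at h1
  have hmem : (g.toSubring V.toSubring hg).coeff i ∈ IsLocalRing.maximalIdeal V.toSubring :=
    (Ideal.Quotient.eq_zero_iff_mem).mp h1
  rw [IsLocalRing.mem_maximalIdeal, mem_nonunits_iff] at hmem
  exact hmem (isUnit_iff_exists_inv.mpr ⟨⟨(g.coeff i)⁻¹, hiinv⟩,
    Subtype.ext (by simpa [hc] using mul_inv_cancel₀ hi0)⟩)

lemma coeff_mul_mem {f₁ f₂ : K[X]} (h₁ : ∀ i, f₁.coeff i ∈ V) (h₂ : ∀ i, f₂.coeff i ∈ V) :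
    ∀ i, (f₁ * f₂).coeff i ∈ V := by
  intro i
  rw [Polynomial.coeff_mul]
  exact Subring.sum_mem _ fun c _ => Subring.mul_mem _ (h₁ _) (h₂ _)

lemma gauss {g₁ g₂ : K[X]} (h₁ : ∀ i, g₁.coeff i ∈ V) (h₂ : ∀ i, g₂.coeff i ∈ V)
    (u₁ : ∃ i, g₁.coeff i ≠ 0 ∧ (g₁.coeff i)⁻¹ ∈ V)
    (u₂ : ∃ i, g₂.coeff i ≠ 0 ∧ (g₂.coeff i)⁻¹ ∈ V) :
    ∃ i, (g₁ * g₂).coeff i ≠ 0 ∧ ((g₁ * g₂).coeff i)⁻¹ ∈ V := by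
  classical
  have e₁ := map_toSubring g₁ V.toSubring (coeffs_subset V h₁)
  have e₂ := map_toSubring g₂ V.toSubring (coeffs_subset V h₂)
  set p₁ := g₁.toSubring V.toSubring (coeffs_subset V h₁)
  set p₂ := g₂.toSubring V.toSubring (coeffs_subset V h₂)
  have hne : (p₁ * p₂).map (IsLocalRing.residue V.toSubring) ≠ 0 := by
    rw [Polynomial.map_mul]
    exact mul_ne_zero (map_residue_ne_zero V _ u₁) (map_residue_ne_zero V _ u₂)
  obtain ⟨i, hi⟩ : ∃ i, ((p₁ * p₂).map (IsLocalRing.residue V.toSubring)).coeff i ≠ 0 := by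
    by_contra h
    push_neg at h
    exact hne (Polynomial.ext fun n => by simp only [Polynomial.coeff_zero]; exact h n)
  rw [coeff_map] at hi
  have hunit : IsUnit ((p₁ * p₂).coeff i) := by
    by_contra h
    exact hi (Ideal.Quotient.eq_zero_iff_mem.mpr ((IsLocalRing.mem_maximalIdeal _).mpr h))
  obtain ⟨b, hb⟩ := isUnit_iff_exists_inv.mp hunit
  have hcoeff : ((p₁ * p₂).coeff i : K) = (g₁ * g₂).coeff i := by
    conv_rhs => rw [← e₁, ← e₂, ← Polynomial.map_mul]
    rw [coeff_map]
    rfl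
  have hbK : ((p₁ * p₂).coeff i : K) * (b : K) = 1 := by
    exact_mod_cast congrArg (Subtype.val) hb
  refine ⟨i, ?_, ?_⟩
  · rw [← hcoeff]; intro h; rw [h, zero_mul] at hbK; exact zero_ne_one hbK
  · rw [← hcoeff, inv_eq_of_mul_eq_one_right hbK]
    exact b.2

end TE

section TE2
variable {K : Type*} [Field K] (V : ValuationSubring K)

lemma denom_ne_zero {g : K[X]} (hu : ∃ i, g.coeff i ≠ 0 ∧ (g.coeff i)⁻¹ ∈ V) :
    algebraMap K[X] (RatFunc K) g ≠ 0 := by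
  obtain ⟨i, hi, -⟩ := hu
  have hg : g ≠ 0 := fun h => hi (by simp [h])
  exact fun h => hg (RatFunc.algebraMap_injective K (by simpa using h))

lemma coeff_one_mem : ∀ i, (1 : K[X]).coeff i ∈ V := by
  intro i
  rw [Polynomial.coeff_one]
  split_ifs
  · exact one_mem V
  · exact zero_mem V

lemma one_unit_coeff : ∃ i, (1 : K[X]).coeff i ≠ 0 ∧ ((1 : K[X]).coeff i)⁻¹ ∈ V :=
  ⟨0, by simp, by simpa using one_mem V⟩

lemma one_mem_TE : (1 : RatFunc K) ∈ trivialExtSet V :=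
  ⟨1, 1, coeff_one_mem V, coeff_one_mem V, one_unit_coeff V, by simp⟩

lemma zero_mem_TE : (0 : RatFunc K) ∈ trivialExtSet V :=
  ⟨0, 1, fun i => by simpa using zero_mem V, coeff_one_mem V, one_unit_coeff V, by simp⟩

lemma mul_mem_TE {a b : RatFunc K} (ha : a ∈ trivialExtSet V) (hb : b ∈ trivialExtSet V) :
    a * b ∈ trivialExtSet V := by
  obtain ⟨f₁, g₁, hf₁, hg₁, hu₁, rfl⟩ := ha
  obtain ⟨f₂, g₂, hf₂, hg₂, hu₂, rfl⟩ := hb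
  exact ⟨f₁ * f₂, g₁ * g₂, coeff_mul_mem V hf₁ hf₂, coeff_mul_mem V hg₁ hg₂,
    gauss V hg₁ hg₂ hu₁ hu₂, by rw [div_mul_div_comm, map_mul, map_mul]⟩

lemma neg_mem_TE {a : RatFunc K} (ha : a ∈ trivialExtSet V) : -a ∈ trivialExtSet V := by
  obtain ⟨f, g, hf, hg, hu, rfl⟩ := ha
  exact ⟨-f, g, fun i => by rw [Polynomial.coeff_neg]; exact Subring.neg_mem _ (hf i),
    hg, hu, by rw [map_neg, neg_div]⟩

lemma add_mem_TE {a b : RatFunc K} (ha : a ∈ trivialExtSet V) (hb : b ∈ trivialExtSet V) :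
    a + b ∈ trivialExtSet V := by
  obtain ⟨f₁, g₁, hf₁, hg₁, hu₁, rfl⟩ := ha
  obtain ⟨f₂, g₂, hf₂, hg₂, hu₂, rfl⟩ := hb
  refine ⟨f₁ * g₂ + f₂ * g₁, g₁ * g₂, ?_, coeff_mul_mem V hg₁ hg₂,
    gauss V hg₁ hg₂ hu₁ hu₂, ?_⟩
  · intro i
    rw [Polynomial.coeff_add]
    exact Subring.add_mem _ (coeff_mul_mem V hf₁ hg₂ i) (coeff_mul_mem V hf₂ hg₁ i)
  · rw [div_add_div _ _ (denom_ne_zero V hu₁) (denom_ne_zero V hu₂)]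
    push_cast [map_add, map_mul]
    ring_nf

lemma exists_max_coeff {f : K[X]} (hf : f ≠ 0) :
    ∃ i, f.coeff i ≠ 0 ∧ ∀ j, f.coeff j * (f.coeff i)⁻¹ ∈ V := by
  obtain ⟨i, hi, hmax⟩ := f.support.exists_max_image (fun j => V.valuation (f.coeff j))
    (Polynomial.support_nonempty.mpr hf)
  have hi0 : f.coeff i ≠ 0 := Polynomial.mem_support_iff.mp hi
  refine ⟨i, hi0, fun j => ?_⟩
  by_cases hj : j ∈ f.support
  · obtain ⟨a, ha⟩ := (V.valuation_le_iff _ _).mp (hmax j hj)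
    have : f.coeff j * (f.coeff i)⁻¹ = a := by
      rw [← ha, mul_assoc, mul_inv_cancel₀ hi0, mul_one]
    rw [this]; exact a.2
  · rw [Polynomial.notMem_support_iff.mp hj, zero_mul]; exact Subring.zero_mem _

end TE2

section TE3
variable {K : Type*} [Field K] (V : ValuationSubring K)

lemma X_mem_TE : (RatFunc.X : RatFunc K) ∈ trivialExtSet V := by
  refine ⟨Polynomial.X, 1, ?_, coeff_one_mem V, one_unit_coeff V, by
    rw [RatFunc.algebraMap_X, map_one, div_one]⟩
  intro i
  rw [Polynomial.coeff_X]
  split_ifs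
  · exact one_mem V
  · exact zero_mem V

lemma X_inv_mem_TE : (RatFunc.X : RatFunc K)⁻¹ ∈ trivialExtSet V := by
  refine ⟨1, Polynomial.X, coeff_one_mem V, ?_, ⟨1, by simp, by simpa using one_mem V⟩, by
    rw [RatFunc.algebraMap_X, map_one, one_div]⟩
  intro i
  rw [Polynomial.coeff_X]
  split_ifs
  · exact one_mem V
  · exact zero_mem V

lemma const_div_mem_TE {f : K[X]} (hf : f ≠ 0) :
    algebraMap K (RatFunc K) (f.coeff 0) / algebraMap K[X] (RatFunc K) f ∈ trivialExtSet V := by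
  obtain ⟨i, hi0, hmem⟩ := exists_max_coeff V hf
  set c := f.coeff i with hc
  refine ⟨Polynomial.C ((f.coeff i)⁻¹ * f.coeff 0), Polynomial.C (f.coeff i)⁻¹ * f,
    ?_, ?_, ⟨i, ?_, ?_⟩, ?_⟩
  · intro j
    rw [Polynomial.coeff_C]
    split_ifs
    · rw [mul_comm]; exact hmem 0
    · exact zero_mem V
  · intro j
    rw [Polynomial.coeff_C_mul, mul_comm]
    exact hmem j
  · rw [Polynomial.coeff_C_mul, inv_mul_cancel₀ hi0]
    exact one_ne_zero
  · rw [Polynomial.coeff_C_mul, inv_mul_cancel₀ hi0, inv_one]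
    exact one_mem V
  · simp only [map_mul]
    rw [mul_div_mul_left _ _ (by
        rw [Ne, map_eq_zero_iff _ (RatFunc.algebraMap_injective K), Polynomial.C_eq_zero]
        exact inv_ne_zero hi0), RatFunc.algebraMap_C, RatFunc.algebraMap_eq_C]

lemma const_mem_TE_iff (x : K) :
    algebraMap K (RatFunc K) x ∈ trivialExtSet V ↔ x ∈ V := by
  constructor
  · rintro ⟨f, g, hf, hg, hu, heq⟩
    have hgne := denom_ne_zero V hu
    have h1 : algebraMap K[X] (RatFunc K) (Polynomial.C x * g) = algebraMap K[X] (RatFunc K) f := by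
      rw [map_mul, RatFunc.algebraMap_C, ← RatFunc.algebraMap_eq_C, heq,
        div_mul_cancel₀ _ hgne]
    have h2 : Polynomial.C x * g = f := RatFunc.algebraMap_injective K h1
    obtain ⟨i, hgi, hginv⟩ := hu
    have h3 : x * g.coeff i = f.coeff i := by
      rw [← h2, Polynomial.coeff_C_mul]
    have : x = f.coeff i * (g.coeff i)⁻¹ := by
      field_simp [hgi]
      exact h3
    rw [this]
    exact mul_mem (hf i) hginv
  · intro hx
    refine ⟨Polynomial.C x, 1, ?_, coeff_one_mem V, one_unit_coeff V, by
      rw [RatFunc.algebraMap_C, RatFunc.algebraMap_eq_C, map_one, div_one]⟩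
    intro j
    rw [Polynomial.coeff_C]
    split_ifs
    · exact hx
    · exact zero_mem V

lemma mem_of_isIntegralElem {A : Subring K} (hA : (A : Set K) ⊆ V) {x : K}
    (hx : A.subtype.IsIntegralElem x) : x ∈ V := by
  obtain ⟨p, hmonic, heval⟩ := hx
  have hle : A ≤ V.toSubring := hA
  have hint : IsIntegral V.toSubring x := by
    refine ⟨p.map (Subring.inclusion hle), hmonic.map _, ?_⟩
    rw [show algebraMap V.toSubring K = V.toSubring.subtype from rfl, Polynomial.eval₂_map]
    rw [show V.toSubring.subtype.comp (Subring.inclusion hle) = A.subtype from rfl]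
    exact heval
  exact LocalSubring.mem_of_isMax_of_isIntegral V.isMax_toLocalSubring hint

end TE3

section TE4
variable {K : Type*} [Field K]

lemma exists_valuation_notMem {A : Subring K} {x : K} (hx : ¬ A.subtype.IsIntegralElem x) :
    ∃ V : ValuationSubring K, (A : Set K) ⊆ V ∧ x ∉ V := by
  classical
  have hx0 : x ≠ 0 := by
    rintro rfl
    exact hx ⟨Polynomial.X, Polynomial.monic_X, by simp⟩
  set S := Algebra.adjoin A ({x⁻¹} : Set K) with hS
  set B := S.toSubring with hB
  have hxinv : x⁻¹ ∈ B := Algebra.self_mem_adjoin_singleton A x⁻¹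
  set b : B := ⟨x⁻¹, hxinv⟩ with hb
  have hI : Ideal.span {b} ≠ ⊤ := by
    intro htop
    obtain ⟨c, hc⟩ := Ideal.mem_span_singleton'.mp (Ideal.eq_top_iff_one _ |>.mp htop)
    have hcx : (c : K) * x⁻¹ = 1 := congrArg Subtype.val hc
    have hcx' : (c : K) = x := (mul_inv_eq_one₀ hx0).mp hcx
    have hxS : x ∈ S := hcx' ▸ c.2
    rw [hS, Algebra.adjoin_singleton_eq_range_aeval] at hxS
    obtain ⟨p, hp⟩ := hxS
    apply hx
    set d := p.natDegree with hd
    refine ⟨Polynomial.X ^ (d + 1) -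
      ∑ j ∈ Finset.range (d + 1), Polynomial.C (p.coeff j) * Polynomial.X ^ (d - j),
      Polynomial.monic_X_pow_sub ?_, ?_⟩
    · refine lt_of_le_of_lt (Polynomial.degree_sum_le _ _) ?_
      rw [Finset.sup_lt_iff (by exact_mod_cast WithBot.bot_lt_coe (d + 1))]
      intro j hj
      exact lt_of_le_of_lt (Polynomial.degree_C_mul_X_pow_le _ _)
        (by exact_mod_cast Nat.lt_succ_of_le (Nat.sub_le d j))
    · have hp' : Polynomial.eval₂ A.subtype x⁻¹ p = x := hp
      have hpsum : (∑ j ∈ Finset.range (d + 1), A.subtype (p.coeff j) * (x⁻¹) ^ j) = x :=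
        (Polynomial.eval₂_eq_sum_range A.subtype x⁻¹).symm.trans hp'
      have hsum : ∑ j ∈ Finset.range (d + 1), A.subtype (p.coeff j) * x ^ (d - j)
          = x ^ (d + 1) := by
        calc ∑ j ∈ Finset.range (d + 1), A.subtype (p.coeff j) * x ^ (d - j)
            = ∑ j ∈ Finset.range (d + 1), (A.subtype (p.coeff j) * (x⁻¹) ^ j) * x ^ d := by
              refine Finset.sum_congr rfl fun j hj => ?_
              rw [pow_sub₀ x hx0 (Nat.le_of_lt_succ (Finset.mem_range.mp hj)), inv_pow]
              ring
          _ = (∑ j ∈ Finset.range (d + 1), A.subtype (p.coeff j) * (x⁻¹) ^ j) * x ^ d :=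
              (Finset.sum_mul _ _ _).symm
          _ = x * x ^ d := by rw [hpsum]
          _ = x ^ (d + 1) := by ring
      rw [Polynomial.eval₂_sub, Polynomial.eval₂_X_pow, Polynomial.eval₂_finset_sum]
      simp only [Polynomial.eval₂_mul, Polynomial.eval₂_C, Polynomial.eval₂_X_pow]
      rw [hsum, sub_self]
  obtain ⟨M, hM, hIM⟩ := Ideal.exists_le_maximal _ hI
  set L := LocalSubring.ofPrime B M with hL
  obtain ⟨V, hle, hloc⟩ := L.exists_le_valuationSubring
  refine ⟨V, ?_, ?_⟩
  · intro a ha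
    exact hle (LocalSubring.le_ofPrime B M (show a ∈ B from S.algebraMap_mem ⟨a, ha⟩))
  · intro hxV
    have hbM : b ∈ M := hIM (Ideal.subset_span rfl)
    have hbnu : ¬ IsUnit (Subring.inclusion (LocalSubring.le_ofPrime B M) b) := by
      intro h
      exact (IsLocalization.AtPrime.isUnit_to_map_iff L.toSubring M b).mp h hbM
    apply hbnu
    apply hloc.map_nonunit
    exact isUnit_iff_exists_inv.mpr ⟨⟨x, hxV⟩, Subtype.ext (inv_mul_cancel₀ hx0)⟩

end TE4


noncomputable def krSubring {K : Type*} [Field K] (A : Subring K) : Subring (RatFunc K) where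
  carrier := krSet A
  one_mem' := Set.mem_iInter₂.mpr fun V _ => one_mem_TE V
  zero_mem' := Set.mem_iInter₂.mpr fun V _ => zero_mem_TE V
  mul_mem' := fun ha hb => Set.mem_iInter₂.mpr fun V hV =>
    mul_mem_TE V (Set.mem_iInter₂.mp ha V hV) (Set.mem_iInter₂.mp hb V hV)
  add_mem' := fun ha hb => Set.mem_iInter₂.mpr fun V hV =>
    add_mem_TE V (Set.mem_iInter₂.mp ha V hV) (Set.mem_iInter₂.mp hb V hV)
  neg_mem' := fun ha => Set.mem_iInter₂.mpr fun V hV =>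
    neg_mem_TE V (Set.mem_iInter₂.mp ha V hV)

end Aux

/-- For any subring `A` of a field `K`, `Kr(K|A) := ⋂ {V(T) | V ∈ Zar(K|A)}` is a
`K`-function ring, and `Kr(K|A) ∩ K` is the integral closure of `A` in `K`. -/
theorem kr_isKFunctionRing {K : Type*} [Field K] (A : Subring K) :
    ∃ R : Subring (RatFunc K), (R : Set (RatFunc K)) = krSet A ∧ IsKFunctionRing R ∧
      {x : K | algebraMap K (RatFunc K) x ∈ R} = {x : K | A.subtype.IsIntegralElem x} := by
  refine ⟨krSubring A, rfl, ⟨?_, ?_, ?_⟩, ?_⟩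
  · exact Set.mem_iInter₂.mpr fun V _ => X_mem_TE V
  · exact Set.mem_iInter₂.mpr fun V _ => X_inv_mem_TE V
  · intro f hf
    have hfne : algebraMap K[X] (RatFunc K) f ≠ 0 :=
      fun h => hf (RatFunc.algebraMap_injective K (by simpa using h))
    refine ⟨algebraMap K (RatFunc K) (f.coeff 0) / algebraMap K[X] (RatFunc K) f,
      Set.mem_iInter₂.mpr fun V _ => const_div_mem_TE V hf, ?_⟩
    rw [mul_comm, div_mul_cancel₀ _ hfne]
  · ext x
    simp only [Set.mem_setOf_eq]
    constructor
    · intro h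
      by_contra hni
      obtain ⟨V, hAV, hxV⟩ := exists_valuation_notMem hni
      exact hxV ((const_mem_TE_iff V x).mp (Set.mem_iInter₂.mp h V hAV))
    · intro h
      exact Set.mem_iInter₂.mpr fun V hV =>
        (const_mem_TE_iff V x).mpr (mem_of_isIntegralElem V hV h)
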